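/- arXiv:2307.16271 — 2 statements merged into one kernel-verified Lean document; each statement's English description precedes it below -/
import Mathlib

section
/- Let φ : A → B be a homomorphism of commutative rings and p a prime number. Suppose (1) B is generated as an A-algebra by elements b such that for some n ≥ 1 both p^n·b and b^{p^n} lie in the image of φ, and (2) every element of the kernel of φ is nilpotent. Then the induced map Spec B → Spec A is a bijection. -/
open Nat Finset

section Aux
variable {B : Type*} [CommRing B] {p : ℕ}

lemma aux_pow_dvd_choose (hp : p.Prime) {N i M K : ℕ} (h0 : i ≠ 0) (hi : i ≤ p ^ N)
    (hM : ¬ p ^ M ∣ i) (hKN : M + K ≤ N) : p ^ K ∣ (p ^ N).choose i := by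
  have hmult : multiplicity p i < M := by
    by_contra h
    exact hM ((pow_dvd_pow p (le_of_not_gt h)).trans (pow_multiplicity_dvd p i))
  have hE := hp.emultiplicity_choose_prime_pow hi h0
  refine pow_dvd_of_le_emultiplicity ?_
  rw [hE]
  exact_mod_cast (by omega : K ≤ N - multiplicity p i)

lemma aux_pow_mem (hp : p.Prime) (R : Subring B) {n : ℕ} {b : B}
    (hb1 : (p : B) ^ n * b ∈ R) (hb2 : b ^ p ^ n ∈ R) (i : ℕ) :
    (p : B) ^ (n * p ^ n) * b ^ i ∈ R := by
  obtain ⟨q, r, hr, rfl⟩ : ∃ q r, r < p ^ n ∧ i = p ^ n * q + r :=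
    ⟨i / p ^ n, i % p ^ n, Nat.mod_lt _ (pow_pos hp.pos n), by rw [Nat.div_add_mod]⟩
  have hexp : n * p ^ n = n * r + n * (p ^ n - r) := by
    rw [← Nat.mul_add, Nat.add_sub_cancel' hr.le]
  have key : (p : B) ^ (n * p ^ n) * b ^ (p ^ n * q + r)
      = (b ^ p ^ n) ^ q * (((p : B) ^ n * b) ^ r * (p : B) ^ (n * (p ^ n - r))) := by
    rw [hexp]; ring
  rw [key]
  exact mul_mem (pow_mem hb2 q) (mul_mem (pow_mem hb1 r) (pow_mem (natCast_mem R p) _))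

end Aux

theorem spec_bijective_of_generators_and_nilpotent_kernel
    (A B : Type*) [CommRing A] [CommRing B] [Algebra A B] (p : ℕ) (hp : p.Prime)
    (h1 : Algebra.adjoin A
        {b : B | ∃ n : ℕ, 1 ≤ n ∧ ((p ^ n : ℕ) • b) ∈ (algebraMap A B).range ∧
          b ^ p ^ n ∈ (algebraMap A B).range} = ⊤)
    (h2 : ∀ a ∈ RingHom.ker (algebraMap A B), IsNilpotent a) :
    Function.Bijective (PrimeSpectrum.comap (algebraMap A B)) := by
  have hsmul : ∀ (n : ℕ) (b : B), ((p ^ n : ℕ) • b) = (p : B) ^ n * b := by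
    intro n b
    rw [nsmul_eq_mul]; push_cast; ring
  have hpmem : ((p : B)) ∈ (algebraMap A B).range := ⟨(p : A), map_natCast _ p⟩
  -- The set of good elements is a subalgebra
  let S : Subalgebra A B :=
  { carrier := {b : B | ∃ n : ℕ, 1 ≤ n ∧ ((p ^ n : ℕ) • b) ∈ (algebraMap A B).range ∧
      b ^ p ^ n ∈ (algebraMap A B).range}
    algebraMap_mem' := by
      intro a
      refine ⟨1, le_refl 1, ?_, ?_⟩
      · rw [hsmul]
        exact mul_mem (pow_mem hpmem 1) (RingHom.mem_range_self _ a)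
      · exact pow_mem (RingHom.mem_range_self _ a) _
    mul_mem' := by
      rintro b c ⟨n, hn, hb1, hb2⟩ ⟨m, hm, hc1, hc2⟩
      rw [hsmul] at hb1 hc1
      refine ⟨n + m, by omega, ?_, ?_⟩
      · rw [hsmul]
        have h : (p : B) ^ (n + m) * (b * c) = ((p:B)^n * b) * ((p:B)^m * c) := by ring
        rw [h]; exact mul_mem hb1 hc1
      · have h : (b * c) ^ p ^ (n + m) = (b ^ p ^ n) ^ p ^ m * (c ^ p ^ m) ^ p ^ n := by
          rw [mul_pow, ← pow_mul, ← pow_mul, ← pow_add, ← pow_add, Nat.add_comm m n]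
        rw [h]; exact mul_mem (pow_mem hb2 _) (pow_mem hc2 _)
    add_mem' := by
      rintro b c ⟨n, hn, hb1, hb2⟩ ⟨m, hm, hc1, hc2⟩
      rw [hsmul] at hb1 hc1
      obtain ⟨K, hK⟩ : ∃ K, K = n * p ^ n + m * p ^ m := ⟨_, rfl⟩
      refine ⟨n + m + K, by omega, ?_, ?_⟩
      · rw [hsmul]
        have h : (p : B) ^ (n + m + K) * (b + c)
            = (p:B)^(m + K) * ((p:B)^n * b) + (p:B)^(n + K) * ((p:B)^m * c) := by
          ring
        rw [h]
        exact add_mem (mul_mem (pow_mem hpmem _) hb1) (mul_mem (pow_mem hpmem _) hc1)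
      · rw [add_pow]
        refine Subring.sum_mem _ ?_
        intro i hi
        rw [Finset.mem_range] at hi
        have hi' : i ≤ p ^ (n + m + K) := by omega
        by_cases hdvd : p ^ (max n m) ∣ i
        · have hbn : p ^ n ∣ i := (pow_dvd_pow p (le_max_left n m)).trans hdvd
          have hcm : p ^ m ∣ p ^ (n + m + K) - i :=
            Nat.dvd_sub (pow_dvd_pow p (by omega))
              ((pow_dvd_pow p (le_max_right n m)).trans hdvd)
          obtain ⟨v, hv⟩ := hcm
          obtain ⟨u, hu⟩ := hbn
          rw [hv, hu, pow_mul, pow_mul]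
          refine mul_mem (mul_mem (pow_mem hb2 u) (pow_mem hc2 v)) ?_
          exact natCast_mem _ _
        · have h0 : i ≠ 0 := by rintro rfl; exact hdvd (dvd_zero _)
          obtain ⟨C, hC⟩ : p ^ K ∣ (p ^ (n + m + K)).choose i :=
            aux_pow_dvd_choose hp h0 hi' hdvd (by omega)
          have h : b ^ i * c ^ (p ^ (n + m + K) - i) * ↑((p ^ (n + m + K)).choose i)
              = ((p:B) ^ (n * p ^ n) * b ^ i) *
                ((p:B) ^ (m * p ^ m) * c ^ (p ^ (n + m + K) - i)) * (C : B) := by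
            rw [hC]; push_cast; rw [hK]; rw [pow_add]; ring
          rw [h]
          exact mul_mem (mul_mem (aux_pow_mem hp _ hb1 hb2 _)
            (aux_pow_mem hp _ hc1 hc2 _)) (natCast_mem _ _) }
  -- every element of B is "good"
  have hST : ∀ b : B, ∃ n : ℕ, 1 ≤ n ∧ ((p ^ n : ℕ) • b) ∈ (algebraMap A B).range ∧
      b ^ p ^ n ∈ (algebraMap A B).range := by
    intro b
    have hle : Algebra.adjoin A
        {b : B | ∃ n : ℕ, 1 ≤ n ∧ ((p ^ n : ℕ) • b) ∈ (algebraMap A B).range ∧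
          b ^ p ^ n ∈ (algebraMap A B).range} ≤ S :=
      Algebra.adjoin_le fun x hx => hx
    rw [h1] at hle
    exact hle trivial
  -- integrality
  have hInt : Algebra.IsIntegral A B := by
    refine ⟨fun b => ?_⟩
    obtain ⟨n, hn, -, a, ha⟩ := hST b
    exact IsIntegral.of_pow (pow_pos hp.pos n) (ha ▸ isIntegral_algebraMap)
  constructor
  · -- injectivity
    have key : ∀ q q' : PrimeSpectrum B,
        PrimeSpectrum.comap (algebraMap A B) q = PrimeSpectrum.comap (algebraMap A B) q' →
        q.asIdeal ≤ q'.asIdeal := by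
      intro q q' h b hb
      obtain ⟨n, hn, -, a, ha⟩ := hST b
      have h1' : algebraMap A B a ∈ q.asIdeal := by
        rw [ha]; exact Ideal.pow_mem_of_mem q.asIdeal hb _ (pow_pos hp.pos n)
      have h2' : a ∈ (PrimeSpectrum.comap (algebraMap A B) q).asIdeal := h1'
      rw [h] at h2'
      have h3' : b ^ p ^ n ∈ q'.asIdeal := by rw [← ha]; exact h2'
      exact q'.isPrime.mem_of_pow_mem _ h3'
    intro q q' h
    exact PrimeSpectrum.ext (le_antisymm (key q q' h) (key q' q h.symm))
  · -- surjectivity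
    intro P
    have hker : RingHom.ker (algebraMap A B) ≤ P.asIdeal := by
      intro a ha
      obtain ⟨k, hk⟩ := h2 a ha
      exact P.isPrime.mem_of_pow_mem k (by rw [hk]; exact P.asIdeal.zero_mem)
    rw [RingHom.ker_eq_comap_bot] at hker
    obtain ⟨Q, -, hQp, hQc⟩ :=
      Ideal.exists_ideal_over_prime_of_isIntegral P.asIdeal ⊥ hker
    exact ⟨⟨Q, hQp⟩, PrimeSpectrum.ext hQc⟩
end

section
/- Let A be a commutative ring containing a field of positive characteristic p and let φ : A → B be a homomorphism of commutative rings such that every element of ker φ is nilpotent and for every b ∈ B there is n ≥ 1 with b^{p^n} in the image of φ (i.e., φ is an F-isomorphism). Then Spec B → Spec A is a homeomorphism. -/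
/-!
STATEMENT 2: Let A be a commutative ring containing a field of positive characteristic p and
φ : A → B a ring homomorphism such that every element of ker φ is nilpotent and every b ∈ B has
some p-power `b ^ p ^ n` (n ≥ 1) in the image of φ (an F-isomorphism).  Then
Spec B → Spec A is a homeomorphism.
-/

section Aux

variable {A B : Type*} [CommRing A] [CommRing B]

/-- key well-definedness lemma -/
theorem Fiso_aux {p : ℕ} (hp : p.Prime) (φ : A →+* B)
    (hker : ∀ a ∈ RingHom.ker φ, IsNilpotent a)
    (P : Ideal A) (hP : P.IsPrime)
    {b : B} {n m : ℕ} {a a' : A}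
    (h1 : b ^ p ^ n = φ a) (h2 : b ^ p ^ m = φ a') (ha : a ∈ P) : a' ∈ P := by
  have key : a ^ p ^ m - a' ^ p ^ n ∈ RingHom.ker φ := by
    simp only [RingHom.mem_ker, map_sub, map_pow, ← h1, ← h2, ← pow_mul, ← pow_mul]
    rw [Nat.mul_comm (p ^ n), sub_self]
  obtain ⟨k, hk⟩ := hker _ key
  have : a ^ p ^ m - a' ^ p ^ n ∈ P := hP.mem_of_pow_mem k (hk ▸ P.zero_mem)
  have h3 : a' ^ p ^ n ∈ P := by
    have := P.sub_mem (P.pow_mem_of_mem ha (p ^ m) (pow_pos hp.pos m)) this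
    simpa using this
  exact hP.mem_of_pow_mem _ h3

theorem Fiso_exists_prime {p : ℕ} (hp : p.Prime) [CharP B p] (φ : A →+* B)
    (hker : ∀ a ∈ RingHom.ker φ, IsNilpotent a)
    (hsurj : ∀ b : B, ∃ n : ℕ, 1 ≤ n ∧ b ^ p ^ n ∈ φ.range)
    (P : Ideal A) (hP : P.IsPrime) :
    ∃ Q : Ideal B, Q.IsPrime ∧ Ideal.comap φ Q = P ∧
      ∀ b : B, b ∈ Q ↔ ∃ n a, b ^ p ^ n = φ a ∧ a ∈ P := by
  haveI : Fact p.Prime := ⟨hp⟩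
  haveI : ExpChar B p := ExpChar.prime hp
  set Q : Ideal B :=
    { carrier := {b | ∃ n a, b ^ p ^ n = φ a ∧ a ∈ P}
      zero_mem' := ⟨1, 0, by rw [zero_pow (pow_ne_zero 1 hp.ne_zero), map_zero], P.zero_mem⟩
      add_mem' := by
        rintro x y ⟨n, a, hxa, ha⟩ ⟨m, a', hya, ha'⟩
        refine ⟨n + m, a ^ p ^ m + a' ^ p ^ n, ?_, ?_⟩
        · rw [add_pow_char_pow, map_add, map_pow, map_pow, ← hxa, ← hya,
            ← pow_mul, ← pow_mul, ← pow_add, ← pow_add, Nat.add_comm m n]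
        · exact P.add_mem (P.pow_mem_of_mem ha _ (pow_pos hp.pos m))
            (P.pow_mem_of_mem ha' _ (pow_pos hp.pos n))
      smul_mem' := by
        rintro r x ⟨n, a, hxa, ha⟩
        obtain ⟨m, -, c, hc⟩ := hsurj r
        refine ⟨m + n, c ^ p ^ n * a ^ p ^ m, ?_, ?_⟩
        · have e1 : φ (c ^ p ^ n) = r ^ p ^ (m + n) := by
            rw [map_pow, hc, ← pow_mul, ← pow_add]
          have e2 : φ (a ^ p ^ m) = x ^ p ^ (m + n) := by
            rw [map_pow, ← hxa, ← pow_mul, ← pow_add, Nat.add_comm n m]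
          rw [map_mul, e1, e2, smul_eq_mul, mul_pow]
        · exact P.mul_mem_left _ (P.pow_mem_of_mem ha _ (pow_pos hp.pos m)) } with hQdef
  have memQ : ∀ b : B, b ∈ Q ↔ ∃ n a, b ^ p ^ n = φ a ∧ a ∈ P := fun b => Iff.rfl
  have hQprime : Q.IsPrime := by
    constructor
    · intro htop
      have h1 : (1 : B) ∈ Q := htop ▸ Submodule.mem_top
      obtain ⟨n, a, h1a, ha⟩ := (memQ 1).mp h1
      rw [one_pow] at h1a
      have : 1 - a ∈ RingHom.ker φ := by simp [RingHom.mem_ker, ← h1a]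
      obtain ⟨k, hk⟩ := hker _ this
      have : 1 - a ∈ P := hP.mem_of_pow_mem k (hk ▸ P.zero_mem)
      have : (1 : A) ∈ P := by simpa using P.add_mem this ha
      exact hP.ne_top (P.eq_top_iff_one.mpr this)
    · intro x y hxy
      obtain ⟨n, a, hxya, ha⟩ := (memQ (x * y)).mp hxy
      obtain ⟨m, -, u, hu⟩ := hsurj x
      obtain ⟨m', -, v, hv⟩ := hsurj y
      -- compare at exponent n + m + m'
      have key : u ^ p ^ (n + m') * v ^ p ^ (n + m) - a ^ p ^ (m + m') ∈ RingHom.ker φ := by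
        have e1 : φ (u ^ p ^ (n + m')) = x ^ p ^ (m + (n + m')) := by
          rw [map_pow, hu, ← pow_mul, ← pow_add]
        have e2 : φ (v ^ p ^ (n + m)) = y ^ p ^ (m' + (n + m)) := by
          rw [map_pow, hv, ← pow_mul, ← pow_add]
        have e3 : φ (a ^ p ^ (m + m')) = (x * y) ^ p ^ (n + (m + m')) := by
          rw [map_pow, ← hxya, ← pow_mul, ← pow_add]
        simp only [RingHom.mem_ker, map_sub, map_mul, e1, e2, e3]
        rw [mul_pow, show m + (n + m') = n + (m + m') from by ring,
          show m' + (n + m) = n + (m + m') from by ring, sub_self]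
      obtain ⟨k, hk⟩ := hker _ key
      have hmem : u ^ p ^ (n + m') * v ^ p ^ (n + m) - a ^ p ^ (m + m') ∈ P :=
        hP.mem_of_pow_mem k (hk ▸ P.zero_mem)
      have : u ^ p ^ (n + m') * v ^ p ^ (n + m) ∈ P := by
        have h4 := P.add_mem hmem
          (P.pow_mem_of_mem ha (p ^ (m + m')) (pow_pos hp.pos _))
        simpa using h4
      rcases hP.mem_or_mem this with h | h
      · exact Or.inl ((memQ x).mpr ⟨m, u, hu.symm, hP.mem_of_pow_mem _ h⟩)
      · exact Or.inr ((memQ y).mpr ⟨m', v, hv.symm, hP.mem_of_pow_mem _ h⟩)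
  refine ⟨Q, hQprime, ?_, memQ⟩
  ext a
  simp only [Ideal.mem_comap]
  constructor
  · intro h
    obtain ⟨n, a', ha', hP'⟩ := (memQ (φ a)).mp h
    have h2 : (φ a) ^ p ^ 0 = φ a := by rw [pow_zero, pow_one]
    exact Fiso_aux hp φ hker P hP ha' h2 hP'
  · intro h
    exact (memQ (φ a)).mpr ⟨1, a ^ p ^ 1, (map_pow φ a _).symm, P.pow_mem_of_mem h _ (pow_pos hp.pos 1)⟩

end Aux

theorem spec_homeomorph_of_F_isomorphism
    (k A B : Type*) [Field k] [CommRing A] [CommRing B] [Algebra k A]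
    (p : ℕ) (hp : p.Prime) [CharP k p]
    (φ : A →+* B)
    (hker : ∀ a ∈ RingHom.ker φ, IsNilpotent a)
    (hsurj : ∀ b : B, ∃ n : ℕ, 1 ≤ n ∧ b ^ p ^ n ∈ φ.range) :
    IsHomeomorph (PrimeSpectrum.comap φ) := by
  by_cases hA : Subsingleton A
  · have hB : Subsingleton B := by
      refine ⟨fun x y => ?_⟩
      obtain ⟨n, -, a, ha⟩ := hsurj (x - y)
      have h1 : (1 : A) = 0 := Subsingleton.elim _ _
      have : (1 : B) = 0 := by rw [← map_one φ, h1, map_zero]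
      calc x = x * 1 := (mul_one x).symm
        _ = y * 1 := by rw [this, mul_zero, mul_zero]
        _ = y := mul_one y
    haveI : IsEmpty (PrimeSpectrum A) := inferInstance
    haveI : IsEmpty (PrimeSpectrum B) := inferInstance
    rw [isHomeomorph_iff_continuous_isClosedMap_bijective]
    exact ⟨PrimeSpectrum.continuous_comap φ,
      fun C hC => by simp [Set.eq_empty_of_isEmpty C],
      fun x => (IsEmpty.false x).elim, fun x => (IsEmpty.false x).elim⟩
  · haveI : Nontrivial A := not_subsingleton_iff_nontrivial.mp hA
    haveI : CharP A p := charP_of_injective_algebraMap (algebraMap k A).injective p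
    haveI : Nontrivial B := by
      refine ⟨1, 0, fun h => ?_⟩
      have : (1 : A) ∈ RingHom.ker φ := by simp [RingHom.mem_ker, h]
      obtain ⟨m, hm⟩ := hker _ this
      simp only [one_pow] at hm
      exact one_ne_zero hm
    haveI : CharP B p := by
      have hpB : (p : B) = 0 := by rw [← map_natCast φ p, CharP.cast_eq_zero, map_zero]
      have hd : ringChar B ∣ p := ringChar.dvd hpB
      rcases (Nat.Prime.eq_one_or_self_of_dvd hp _ hd) with h | h
      · exact absurd h (CharP.ringChar_ne_one)
      · exact h ▸ ringChar.charP B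
    -- surjectivity of comap, with canonical preimage
    have hsurjSpec : ∀ x : PrimeSpectrum A, ∃ y : PrimeSpectrum B,
        PrimeSpectrum.comap φ y = x ∧
        ∀ b : B, b ∈ y.asIdeal ↔ ∃ n a, b ^ p ^ n = φ a ∧ a ∈ x.asIdeal := by
      intro x
      obtain ⟨Q, hQp, hQc, hQm⟩ := Fiso_exists_prime hp φ hker hsurj x.asIdeal x.isPrime
      exact ⟨⟨Q, hQp⟩, PrimeSpectrum.ext hQc, hQm⟩
    have hinj : Function.Injective (PrimeSpectrum.comap φ) := by
      intro y₁ y₂ hy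
      have key : ∀ y₁ y₂ : PrimeSpectrum B, PrimeSpectrum.comap φ y₁ = PrimeSpectrum.comap φ y₂ →
          y₁.asIdeal ≤ y₂.asIdeal := by
        intro y₁ y₂ hy b hb
        obtain ⟨n, -, a, ha⟩ := hsurj b
        have h1 : a ∈ (PrimeSpectrum.comap φ y₁).asIdeal := by
          simpa [PrimeSpectrum.comap_asIdeal, Ideal.mem_comap, ha] using
            y₁.asIdeal.pow_mem_of_mem hb (p ^ n) (pow_pos hp.pos n)
        rw [hy] at h1
        have h2 : b ^ p ^ n ∈ y₂.asIdeal := by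
          simpa [ha] using (Ideal.mem_comap.mp h1)
        exact y₂.isPrime.mem_of_pow_mem _ h2
      exact PrimeSpectrum.ext (le_antisymm (key y₁ y₂ hy) (key y₂ y₁ hy.symm))
    rw [isHomeomorph_iff_continuous_isClosedMap_bijective]
    refine ⟨PrimeSpectrum.continuous_comap φ, ?_, hinj, fun x => ?_⟩
    · -- closed map
      intro C hC
      obtain ⟨s, rfl⟩ := (PrimeSpectrum.isClosed_iff_zeroLocus C).mp hC
      have : PrimeSpectrum.comap φ '' PrimeSpectrum.zeroLocus s =
          PrimeSpectrum.zeroLocus (φ ⁻¹' (Ideal.span s : Set B)) := by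
        ext x
        constructor
        · rintro ⟨y, hy, rfl⟩
          intro a ha
          have h1 : φ a ∈ Ideal.span s := ha
          have h2 : Ideal.span s ≤ y.asIdeal := Ideal.span_le.mpr hy
          exact Ideal.mem_comap.mpr (h2 h1)
        · intro hx
          obtain ⟨y, hyx, hym⟩ := hsurjSpec x
          refine ⟨y, ?_, hyx⟩
          intro b hb
          obtain ⟨n, -, a, ha⟩ := hsurj b
          have h1 : φ a ∈ Ideal.span s := by
            rw [ha]
            exact Ideal.pow_mem_of_mem _ (Ideal.subset_span hb) _ (pow_pos hp.pos n)
          exact (hym b).mpr ⟨n, a, ha.symm, hx h1⟩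
      rw [this]
      exact PrimeSpectrum.isClosed_zeroLocus _
    · obtain ⟨y, hy, -⟩ := hsurjSpec x
      exact ⟨y, hy⟩
end
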